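/- For ν a probability measure on [0,∞) with ν({0}) < 1, z·S_ν(z) → 0 as z → 0⁻ along (δ−1, 0). -/

import Mathlib

open MeasureTheory Set Filter Topology ENNReal

noncomputable section

/-- Cauchy-Stieltjes moment-type transform `M_ν(θ) = ∫ 1/(1-θx) dν(x)`. -/
def Mcs (ν : Measure ℝ) (θ : ℝ) : ℝ := ∫ x, 1 / (1 - θ * x) ∂ν

/-- The mean map `k_ν(θ) = (M_ν(θ) - 1)/(θ M_ν(θ))`. -/
def kcs (ν : Measure ℝ) (θ : ℝ) : ℝ := (Mcs ν θ - 1) / (θ * Mcs ν θ)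

/-- The Cauchy transform `G_ν(z) = ∫ 1/(z-x) dν(x)`. -/
def Gcs (ν : Measure ℝ) (z : ℝ) : ℝ := ∫ x, 1 / (z - x) ∂ν

/-- `Ψ_ν(z) = ∫ zx/(1-zx) dν(x)`. -/
def PsiT (ν : Measure ℝ) (z : ℝ) : ℝ := ∫ x, z * x / (1 - z * x) ∂ν

/-- Topological support of a measure on ℝ. -/
def msupp (ν : Measure ℝ) : Set ℝ := {x | ∀ U ∈ 𝓝 x, ν U ≠ 0}

/-- The natural parameter domain `(θ₋, θ₊) \ {0}`: nonzero `θ` with `θ x < 1` on the support. -/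
def ΘDom (ν : Measure ℝ) : Set ℝ := {θ | θ ≠ 0 ∧ ∀ x ∈ msupp ν, θ * x < 1}

/-- Right-sided parameter domain `(0, θ₊)`. -/
def ΘPlus (ν : Measure ℝ) : Set ℝ := {θ | 0 < θ ∧ ∀ x ∈ msupp ν, θ * x < 1}

/-- `ψ_ν`, the inverse of the mean map `k_ν` on the parameter domain. -/
def ψcs (ν : Measure ℝ) : ℝ → ℝ := Function.invFunOn (kcs ν) (ΘDom ν)

/-- `ψ_ν` for the right-sided family. -/
def ψplus (ν : Measure ℝ) : ℝ → ℝ := Function.invFunOn (kcs ν) (ΘPlus ν)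

/-- `ψ_ν` for the left-sided family (measures on `[0,∞)`, parameter `θ < 0`). -/
def ψminus (ν : Measure ℝ) : ℝ → ℝ := Function.invFunOn (kcs ν) (Iio 0)

/-- The pseudo-variance function `𝕍_ν(m) = m (1/ψ_ν(m) - m)`. -/
def pseudoVar (ν : Measure ℝ) (m : ℝ) : ℝ := m * (1 / ψcs ν m - m)

def pseudoVarMinus (ν : Measure ℝ) (m : ℝ) : ℝ := m * (1 / ψminus ν m - m)

/-- The tilted measure `P_{θ,ν}(dx) = ν(dx)/(M_ν(θ)(1-θx))`. -/
def tilt (ν : Measure ℝ) (θ : ℝ) : Measure ℝ :=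
  ν.withDensity (fun x => ENNReal.ofReal (1 / (Mcs ν θ * (1 - θ * x))))

/-- `Q_{m,ν}`, the element of the CSK family with mean `m`. -/
def Qcsk (ν : Measure ℝ) (m : ℝ) : Measure ℝ := tilt ν (ψcs ν m)

def QcskMinus (ν : Measure ℝ) (m : ℝ) : Measure ℝ := tilt ν (ψminus ν m)

/-- The variance function `V_ν(m) = ∫ (x-m)² dQ_{m,ν}(x)`. -/
def varFun (ν : Measure ℝ) (m : ℝ) : ℝ := ∫ x, (x - m) ^ 2 ∂(Qcsk ν m)

def varFunMinus (ν : Measure ℝ) (m : ℝ) : ℝ := ∫ x, (x - m) ^ 2 ∂(QcskMinus ν m)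

/-- Domain of means (two-sided). -/
def meanDom (ν : Measure ℝ) : Set ℝ := kcs ν '' ΘDom ν

/-- Right-sided domain of means `(m₀(ν), m₊(ν))`. -/
def meanDomPlus (ν : Measure ℝ) : Set ℝ := kcs ν '' ΘPlus ν

/-- Left-sided domain of means `(m₋(ν), m₀(ν))`. -/
def meanDomMinus (ν : Measure ℝ) : Set ℝ := kcs ν '' Iio 0

/-- `χ_ν`, the inverse of `Ψ_ν` on negative reals. -/
def χT (ν : Measure ℝ) : ℝ → ℝ := Function.invFunOn (PsiT ν) (Iio 0)

/-- The S-transform `S_ν(z) = χ_ν(z)(1+z)/z`. -/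
def Stransf (ν : Measure ℝ) (z : ℝ) : ℝ := χT ν z * (1 + z) / z

/-- `m₋(ν) = -1/G_ν(0)` for a measure on `[0,∞)`. -/
def mMinus (ν : Measure ℝ) : ℝ := -(Gcs ν 0)⁻¹

/-- The self-energy (K-transform) `K_ν(z) = z - 1/G_ν(z)`. -/
def KT (ν : Measure ℝ) (z : ℝ) : ℝ := z - 1 / Gcs ν z

/-- A measure is non-degenerate if it is not a Dirac mass. -/
def Nondeg (ν : Measure ℝ) : Prop := ∀ c : ℝ, ν ≠ Measure.dirac c
def pseudoVarPlus (ν : Measure ℝ) (m : ℝ) : ℝ := m * (1 / ψplus ν m - m)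

def QcskPlus (ν : Measure ℝ) (m : ℝ) : Measure ℝ := tilt ν (ψplus ν m)

def varFunPlus (ν : Measure ℝ) (m : ℝ) : ℝ := ∫ x, (x - m) ^ 2 ∂(QcskPlus ν m)

/-- The mean of a measure on `[0,∞)`, as an extended nonnegative real. -/
def m0E (ν : Measure ℝ) : ℝ≥0∞ := ∫⁻ x, ENNReal.ofReal x ∂ν

/-- The Σ-transform `Σ_ν(z) = S_ν(z/(1-z))`. -/
def SigmaT (ν : Measure ℝ) (z : ℝ) : ℝ := Stransf ν (z / (1 - z))

/-- The free Poisson (Marchenko–Pastur) law with density `(1/2π)√((4-x)/x)` on `(0,4)`. -/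
def freePoisson : Measure ℝ :=
  volume.withDensity (fun x => ENNReal.ofReal
    (Set.indicator (Ioo 0 4) (fun y => (1/(2*Real.pi)) * Real.sqrt ((4 - y)/y)) x))

lemma norm_frac_le_one {θ x : ℝ} (hθ : θ ≤ 0) (hx : 0 ≤ x) :
    ‖θ * x / (1 - θ * x)‖ ≤ 1 := by
  have ht : θ * x ≤ 0 := mul_nonpos_of_nonpos_of_nonneg hθ hx
  rw [Real.norm_eq_abs, abs_div, abs_of_nonpos ht,
    abs_of_pos (by linarith : (0:ℝ) < 1 - θ * x), div_le_one (by linarith)]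
  linarith

section Aux
variable (ν : Measure ℝ) [IsProbabilityMeasure ν]

omit [IsProbabilityMeasure ν] in
lemma ae_nonneg (hpos : ν (Iio 0) = 0) : ∀ᵐ x ∂ν, 0 ≤ x := by
  have h := measure_eq_zero_iff_ae_notMem.mp hpos
  filter_upwards [h] with x hx
  simpa [not_lt] using hx

omit [IsProbabilityMeasure ν] in
lemma meas_aux (θ : ℝ) : AEStronglyMeasurable (fun x => θ * x / (1 - θ * x)) ν := by
  apply Measurable.aestronglyMeasurable
  fun_prop

lemma intg_aux (hpos : ν (Iio 0) = 0) {θ : ℝ} (hθ : θ ≤ 0) :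
    Integrable (fun x => θ * x / (1 - θ * x)) ν := by
  apply Integrable.mono' (integrable_const 1) (meas_aux ν θ)
  filter_upwards [ae_nonneg ν hpos] with x hx
  exact norm_frac_le_one hθ hx

lemma psi_mono (hpos : ν (Iio 0) = 0) {θ₁ θ₂ : ℝ} (h1 : θ₁ ≤ θ₂) (h2 : θ₂ ≤ 0) :
    PsiT ν θ₁ ≤ PsiT ν θ₂ := by
  apply integral_mono_ae (intg_aux ν hpos (h1.trans h2)) (intg_aux ν hpos h2)
  filter_upwards [ae_nonneg ν hpos] with x hx
  have ht1 : θ₁ * x ≤ 0 := mul_nonpos_of_nonpos_of_nonneg (h1.trans h2) hx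
  have ht2 : θ₂ * x ≤ 0 := mul_nonpos_of_nonpos_of_nonneg h2 hx
  rw [div_le_div_iff₀ (by linarith) (by linarith)]
  nlinarith [mul_le_mul_of_nonneg_right h1 hx]

lemma Ioi_measure (hpos : ν (Iio 0) = 0) : ν (Ioi 0) = 1 - ν {0} := by
  have hsub : Iic (0:ℝ) ⊆ Iio 0 ∪ {0} := by
    intro x hx
    rcases lt_or_eq_of_le (mem_Iic.mp hx) with h | h
    · exact Or.inl h
    · exact Or.inr (by simp [h])
  have hIic : ν (Iic 0) = ν {0} := by
    apply le_antisymm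
    · calc ν (Iic 0) ≤ ν (Iio 0 ∪ {0}) := measure_mono hsub
        _ ≤ ν (Iio 0) + ν {0} := measure_union_le _ _
        _ = ν {0} := by rw [hpos, zero_add]
    · exact measure_mono (by intro x hx; simp_all)
  have h := measure_compl (measurableSet_Iic (a := (0:ℝ))) (measure_ne_top ν _)
  rw [compl_Iic] at h
  rw [h, hIic, measure_univ]

lemma Ioi_pos (hpos : ν (Iio 0) = 0) (hatom : ν {0} < 1) : 0 < ν (Ioi 0) := by
  rw [Ioi_measure ν hpos, pos_iff_ne_zero]
  intro h
  exact absurd (tsub_eq_zero_iff_le.mp h) (not_le.mpr hatom)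

lemma psi_neg (hpos : ν (Iio 0) = 0) (hatom : ν {0} < 1) {θ : ℝ} (hθ : θ < 0) :
    PsiT ν θ < 0 := by
  have h : 0 < ∫ x, -(θ * x / (1 - θ * x)) ∂ν := by
    rw [integral_pos_iff_support_of_nonneg_ae]
    · refine lt_of_lt_of_le (Ioi_pos ν hpos hatom) (measure_mono ?_)
      intro x hx
      have hx0 : 0 < x := hx
      have ht : θ * x < 0 := mul_neg_of_neg_of_pos hθ hx0
      simp only [Function.mem_support]
      have hlt : θ * x / (1 - θ * x) < 0 := div_neg_of_neg_of_pos ht (by linarith)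
      intro hc; rw [neg_eq_zero] at hc; exact hlt.ne hc
    · filter_upwards [ae_nonneg ν hpos] with x hx
      have ht : θ * x ≤ 0 := mul_nonpos_of_nonpos_of_nonneg hθ.le hx
      have hle : θ * x / (1 - θ * x) ≤ 0 := div_nonpos_of_nonpos_of_nonneg ht (by linarith)
      simpa using hle
    · exact (intg_aux ν hpos hθ.le).neg
  rw [integral_neg] at h
  unfold PsiT
  linarith

lemma psi_tendsto_atBot (hpos : ν (Iio 0) = 0) :
    Tendsto (fun n : ℕ => PsiT ν (-((n:ℝ)+1))) atTop (𝓝 ((ν {0}).toReal - 1)) := by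
  have key := tendsto_integral_of_dominated_convergence (μ := ν)
      (F := fun n x => (-((n:ℝ)+1)) * x / (1 - (-((n:ℝ)+1)) * x))
      (f := (Ioi (0:ℝ)).indicator (fun _ => (-1:ℝ))) (bound := fun _ => 1)
      (fun n => meas_aux ν _) (integrable_const 1)
      (fun n => by
        filter_upwards [ae_nonneg ν hpos] with x hx
        exact norm_frac_le_one (neg_nonpos.mpr (by positivity)) hx)
      (by
        filter_upwards [ae_nonneg ν hpos] with x hx
        rcases hx.eq_or_lt with h | h
        · simpa [← h] using tendsto_const_nhds
        · rw [indicator_of_mem (mem_Ioi.mpr h)]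
          have h0 : Tendsto (fun n : ℕ => ((n:ℝ)+1)) atTop atTop :=
            tendsto_atTop_add_const_right atTop 1 tendsto_natCast_atTop_atTop
          have h1 : Tendsto (fun n : ℕ => 1 + ((n:ℝ)+1) * x) atTop atTop :=
            tendsto_atTop_add_const_left atTop 1 (h0.atTop_mul_const h)
          have h2 : Tendsto (fun n : ℕ => (1 + ((n:ℝ)+1) * x)⁻¹) atTop (𝓝 0) :=
            h1.inv_tendsto_atTop
          have h3 : Tendsto (fun n : ℕ => -1 + (1 + ((n:ℝ)+1) * x)⁻¹) atTop (𝓝 (-1 + 0)) :=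
            h2.const_add _
          rw [add_zero] at h3
          apply h3.congr
          intro n
          have hd : (0:ℝ) < 1 + ((n:ℝ)+1) * x := by positivity
          rw [neg_mul, sub_neg_eq_add, eq_div_iff hd.ne', add_mul, inv_mul_cancel₀ hd.ne']
          ring)
  have hval : ∫ x, (Ioi (0:ℝ)).indicator (fun _ => (-1:ℝ)) x ∂ν = (ν {0}).toReal - 1 := by
    rw [integral_indicator_const (-1:ℝ) measurableSet_Ioi, measureReal_def, Ioi_measure ν hpos,
      ENNReal.toReal_sub_of_le prob_le_one one_ne_top]
    simp [smul_eq_mul]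
  rw [hval] at key
  exact key

lemma psi_tendsto_zero (hpos : ν (Iio 0) = 0) :
    Tendsto (fun n : ℕ => PsiT ν (-(1/((n:ℝ)+1)))) atTop (𝓝 0) := by
  have key := tendsto_integral_of_dominated_convergence (μ := ν)
      (F := fun n x => (-(1/((n:ℝ)+1))) * x / (1 - (-(1/((n:ℝ)+1))) * x))
      (f := fun _ => (0:ℝ)) (bound := fun _ => 1)
      (fun n => meas_aux ν _) (integrable_const 1)
      (fun n => by
        filter_upwards [ae_nonneg ν hpos] with x hx
        exact norm_frac_le_one (neg_nonpos.mpr (by positivity)) hx)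
      (by
        filter_upwards [ae_nonneg ν hpos] with x hx
        have hnum : Tendsto (fun n : ℕ => (-(1/((n:ℝ)+1))) * x) atTop (𝓝 0) := by
          have := (tendsto_one_div_add_atTop_nhds_zero_nat).neg.mul_const x
          simpa using this
        have hden : Tendsto (fun n : ℕ => 1 - (-(1/((n:ℝ)+1))) * x) atTop (𝓝 1) := by
          have := hnum.const_sub 1
          simpa using this
        have := hnum.div hden one_ne_zero
        simpa [Pi.div_def] using this)
  rw [integral_zero] at key
  exact key

lemma psi_surj (hpos : ν (Iio 0) = 0) (hatom : ν {0} < 1) {z : ℝ}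
    (hz : z ∈ Ioo ((ν {0}).toReal - 1) 0) : ∃ θ < (0:ℝ), PsiT ν θ = z := by
  obtain ⟨n, hn⟩ := ((psi_tendsto_atBot ν hpos).eventually_lt_const hz.1).exists
  obtain ⟨m, hm⟩ := ((psi_tendsto_zero ν hpos).eventually_const_lt hz.2).exists
  set a : ℝ := -((n:ℝ)+1) with ha
  set b : ℝ := -(1/((m:ℝ)+1)) with hb
  have hb0 : b < 0 := by rw [hb]; exact neg_lt_zero.mpr (by positivity)
  have hab : a ≤ b := by
    rw [ha, hb, neg_le_neg_iff]
    have h1 : 1/((m:ℝ)+1) ≤ 1 := by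
      rw [div_le_one (by positivity)]; simp
    have h2 : (1:ℝ) ≤ (n:ℝ)+1 := by simp
    linarith
  have hcont : ContinuousOn (PsiT ν) (Icc a b) := by
    intro θ hθ
    have hθ0 : θ < 0 := lt_of_le_of_lt hθ.2 hb0
    apply ContinuousAt.continuousWithinAt
    apply continuousAt_of_dominated (bound := fun _ => 1)
      (Eventually.of_forall fun θ' => meas_aux ν θ')
    · filter_upwards [IsOpen.mem_nhds isOpen_Iio hθ0] with θ' hθ'
      filter_upwards [ae_nonneg ν hpos] with x hx
      exact norm_frac_le_one (le_of_lt hθ') hx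
    · exact integrable_const 1
    · filter_upwards [ae_nonneg ν hpos] with x hx
      have ht : θ * x ≤ 0 := mul_nonpos_of_nonpos_of_nonneg hθ0.le hx
      have hd : 1 - θ * x ≠ 0 := by intro h; linarith
      exact (continuousAt_id.mul continuousAt_const).div
        (continuousAt_const.sub (continuousAt_id.mul continuousAt_const)) hd
  have hmem := intermediate_value_Icc hab hcont ⟨hn.le, hm.le⟩
  obtain ⟨θ, hθmem, hθz⟩ := hmem
  exact ⟨θ, lt_of_le_of_lt hθmem.2 hb0, hθz⟩

end Aux


/-- `z S_ν(z) → 0` as `z → 0⁻` along `(δ-1, 0)`. -/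
theorem zS_tendsto_zero (ν : Measure ℝ) [IsProbabilityMeasure ν]
    (hnd : Nondeg ν) (hpos : ν (Iio 0) = 0) (hatom : ν {0} < 1) :
    Tendsto (fun z => z * Stransf ν z)
      (𝓝[Ioo ((ν {0}).toReal - 1) 0] 0) (𝓝 0) := by
  have hchi : Tendsto (χT ν) (𝓝[Ioo ((ν {0}).toReal - 1) 0] 0) (𝓝 0) := by
    rw [Metric.tendsto_nhds]
    intro ε hε
    have hψε : PsiT ν (-ε) < 0 := psi_neg ν hpos hatom (neg_lt_zero.mpr hε)
    have hmem : Ioi (PsiT ν (-ε)) ∈ 𝓝[Ioo ((ν {0}).toReal - 1) 0] (0:ℝ) :=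
      nhdsWithin_le_nhds (Ioi_mem_nhds hψε)
    filter_upwards [hmem, self_mem_nhdsWithin] with z hz1 hz2
    obtain ⟨θ, hθ0, hθz⟩ := psi_surj ν hpos hatom hz2
    have hex : ∃ a ∈ Iio (0:ℝ), PsiT ν a = z := ⟨θ, hθ0, hθz⟩
    have h1 : χT ν z ∈ Iio (0:ℝ) := Function.invFunOn_mem hex
    have h2 : PsiT ν (χT ν z) = z := Function.invFunOn_eq hex
    have h3 : -ε < χT ν z := by
      by_contra hc
      push_neg at hc
      have hle := psi_mono ν hpos hc (neg_nonpos.mpr hε.le)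
      rw [h2] at hle
      have := mem_Ioi.mp hz1
      linarith
    rw [Real.dist_eq, sub_zero, abs_lt]
    have := mem_Iio.mp h1
    constructor <;> linarith
  have heq : (fun z => χT ν z * (1 + z)) =ᶠ[𝓝[Ioo ((ν {0}).toReal - 1) 0] (0:ℝ)]
      (fun z => z * Stransf ν z) := by
    filter_upwards [self_mem_nhdsWithin] with z hz
    have hz0 : z ≠ 0 := ne_of_lt hz.2
    unfold Stransf
    field_simp
  have h14 : Tendsto (fun z : ℝ => 1 + z) (𝓝[Ioo ((ν {0}).toReal - 1) 0] 0) (𝓝 1) := by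
    have h15 : Tendsto (fun z : ℝ => 1 + z) (𝓝 0) (𝓝 (1 + 0)) :=
      tendsto_const_nhds.add tendsto_id
    simpa using h15.mono_left nhdsWithin_le_nhds
  have hmul : Tendsto (fun z => χT ν z * (1 + z))
      (𝓝[Ioo ((ν {0}).toReal - 1) 0] 0) (𝓝 0) := by
    simpa using hchi.mul h14
  exact Tendsto.congr' heq hmul
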